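/- Let M be an n×n self-adjoint positive semi-definite complex matrix. Then the matrix M∘M̄ − (1/n)(diag M)(diag M)^T, whose (j,k) entry is |M_{j,k}|² − (1/n)M_{j,j}M_{k,k}, is positive semi-definite. -/

import Mathlib

open scoped ComplexOrder
open Complex Matrix Finset

theorem schur_variant (n : ℕ) (M : Matrix (Fin n) (Fin n) ℂ) (hM : M.PosSemidef) :
    Matrix.PosSemidef (Matrix.of fun j k : Fin n =>
      ((‖M j k‖) ^ 2 : ℂ) - (1 / (n : ℂ)) * M j j * M k k) := by
  have hHerm := hM.1
  have hconj : ∀ j k, star (M k j) = M j k := fun j k => hHerm.apply j k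
  have habs2 : ∀ (z : ℂ), ((‖z‖ : ℂ))^2 = z * star z := by
    intro z
    rw [← Complex.ofReal_pow, Complex.sq_norm, Complex.star_def]
    exact (Complex.mul_conj z).symm
  refine Matrix.PosSemidef.of_dotProduct_mulVec_nonneg ?_ ?_
  · ext j k
    simp only [Matrix.conjTranspose_apply, Matrix.of_apply, star_sub, star_mul', star_pow,
      Complex.star_def, Complex.conj_ofReal]
    have h1 : (starRingEnd ℂ) (M k j) = M j k := hconj j k
    have h2 : (starRingEnd ℂ) (M k k) = M k k := hconj k k
    have h3 : (starRingEnd ℂ) (M j j) = M j j := hconj j j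
    have habs : ‖M k j‖ = ‖M j k‖ := by
      rw [← h1]; exact (Complex.norm_conj _).symm
    have h4 : (starRingEnd ℂ) (1 / (n : ℂ)) = 1 / (n : ℂ) := by
      simp [map_div₀]
    rw [h2, h3, habs, h4]
    ring
  · intro x
    obtain ⟨S, hS, hSH⟩ : ∃ S : Matrix (Fin n) (Fin n) ℂ, S * S = M ∧ S.IsHermitian := by
      open scoped MatrixOrder in
      exact ⟨CFC.sqrt M, CFC.sqrt_mul_sqrt_self M hM.nonneg, (CFC.sqrt_nonneg M).posSemidef.1⟩
    set D : Matrix (Fin n) (Fin n) ℂ := Matrix.diagonal x with hD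
    set B : Matrix (Fin n) (Fin n) ℂ := S * D * S with hB
    have hDH : Dᴴ = Matrix.diagonal (star x) := by
      rw [hD, Matrix.diagonal_conjTranspose]
    -- trace identities
    have htB : B.trace = (D * M).trace := by
      rw [hB, Matrix.trace_mul_cycle, hS, Matrix.trace_mul_comm]
    have hT1 : (Bᴴ * B).trace = (Dᴴ * M * D * M).trace := by
      have hBH : Bᴴ = S * Dᴴ * S := by
        rw [hB, Matrix.conjTranspose_mul, Matrix.conjTranspose_mul, hSH.eq, Matrix.mul_assoc]
      rw [hBH, hB]
      have e1 : S * Dᴴ * S * (S * D * S) = S * (Dᴴ * S * (S * D * S)) := by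
        simp only [Matrix.mul_assoc]
      rw [e1, Matrix.trace_mul_comm]
      have e2 : Dᴴ * S * (S * D * S) * S = Dᴴ * (S * S) * D * (S * S) := by
        simp only [Matrix.mul_assoc]
      rw [e2, hS]
    -- entrywise traces
    have htrDM : (D * M).trace = ∑ i, x i * M i i := by
      simp [Matrix.trace, hD, Matrix.diag, Matrix.diagonal_mul]
    have htrB : B.trace = ∑ i, B i i := rfl
    have hT1' : (Bᴴ * B).trace = ∑ j, ∑ k, star (B k j) * B k j := by
      simp [Matrix.trace, Matrix.diag, Matrix.mul_apply, Matrix.conjTranspose_apply]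
    have hq_tr1 : (Dᴴ * M * D * M).trace
        = ∑ j, ∑ k, star (x j) * (M j k * star (M j k)) * x k := by
      rw [Matrix.trace]
      refine Finset.sum_congr rfl fun j _ => ?_
      have : (Dᴴ * M * D * M).diag j = ∑ k, (Dᴴ * M * D) j k * M k j := by
        simp [Matrix.diag, Matrix.mul_apply]
      rw [this]
      refine Finset.sum_congr rfl fun k _ => ?_
      have h1 : (Dᴴ * M * D) j k = star (x j) * M j k * x k := by
        simp [hDH, hD, Matrix.diagonal_mul, Matrix.mul_diagonal, Matrix.mul_assoc]
      have hkj : M k j = star (M j k) := by rw [← hconj j k, star_star]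
      rw [h1, hkj]
      ring
    -- the quadratic form
    set t : ℂ := (D * M).trace with ht
    have key : star x ⬝ᵥ ((Matrix.of fun j k : Fin n =>
        ((‖M j k‖) ^ 2 : ℂ) - (1 / (n : ℂ)) * M j j * M k k) *ᵥ x)
        = (Bᴴ * B).trace - (1 / (n : ℂ)) * (star t * t) := by
      have hstart : star x ⬝ᵥ ((Matrix.of fun j k : Fin n =>
          ((‖M j k‖) ^ 2 : ℂ) - (1 / (n : ℂ)) * M j j * M k k) *ᵥ x)
          = ∑ j, ∑ k, (star (x j) * (M j k * star (M j k)) * x k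
              - (1 / (n : ℂ)) * ((star (x j) * M j j) * (M k k * x k))) := by
        simp only [dotProduct, Matrix.mulVec, Matrix.of_apply, Pi.star_apply]
        refine Finset.sum_congr rfl fun j _ => ?_
        rw [Finset.mul_sum]
        refine Finset.sum_congr rfl fun k _ => ?_
        rw [habs2]
        ring
      rw [hstart]
      have hsplit : ∑ j, ∑ k, (star (x j) * (M j k * star (M j k)) * x k
              - (1 / (n : ℂ)) * ((star (x j) * M j j) * (M k k * x k)))
          = (∑ j, ∑ k, star (x j) * (M j k * star (M j k)) * x k)
            - (1 / (n : ℂ)) * ((∑ j, star (x j) * M j j) * (∑ k, M k k * x k)) := by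
        rw [Finset.sum_mul_sum, Finset.mul_sum, ← Finset.sum_sub_distrib]
        refine Finset.sum_congr rfl fun j _ => ?_
        rw [Finset.mul_sum, ← Finset.sum_sub_distrib]
      rw [hsplit, hT1, hq_tr1]
      congr 1
      congr 1
      have h1 : (∑ j, star (x j) * M j j) = star t := by
        rw [htrDM, star_sum]
        refine Finset.sum_congr rfl fun i _ => ?_
        rw [star_mul', hconj i i]
      have h2 : (∑ k, M k k * x k) = t := by
        rw [htrDM]
        exact Finset.sum_congr rfl fun i _ => mul_comm _ _
      rw [h1, h2]
    rw [key]
    -- move to the reals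
    have hBsum : (Bᴴ * B).trace = ((∑ j, ∑ k, Complex.normSq (B k j) : ℝ) : ℂ) := by
      rw [hT1']
      push_cast
      refine Finset.sum_congr rfl fun j _ => Finset.sum_congr rfl fun k _ => ?_
      rw [Complex.star_def]
      exact Complex.normSq_eq_conj_mul_self.symm
    have htns : star t * t = ((Complex.normSq t : ℝ) : ℂ) := by
      rw [Complex.star_def]
      exact Complex.normSq_eq_conj_mul_self.symm
    have hn : (1 / (n : ℂ)) = (((1 / (n : ℝ)) : ℝ) : ℂ) := by push_cast; ring
    rw [hBsum, htns, hn, ← Complex.ofReal_mul, ← Complex.ofReal_sub]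
    rw [Complex.zero_le_real]
    -- the real inequality
    set R1 : ℝ := ∑ j, ∑ k, Complex.normSq (B k j) with hR1
    have hR1nonneg : 0 ≤ R1 := by
      rw [hR1]
      exact Finset.sum_nonneg fun j _ => Finset.sum_nonneg fun k _ => Complex.normSq_nonneg _
    have hdiag_le : ∑ i, Complex.normSq (B i i) ≤ R1 := by
      rw [hR1]
      refine Finset.sum_le_sum fun j _ => ?_
      exact Finset.single_le_sum (f := fun k => Complex.normSq (B k j))
        (fun k _ => Complex.normSq_nonneg _) (Finset.mem_univ j)
    have habs_t : ‖t‖ ≤ ∑ i, ‖B i i‖ := by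
      have : t = ∑ i, B i i := htB.symm.trans htrB
      rw [this]
      exact norm_sum_le _ _
    have hcs : (∑ i, ‖B i i‖) ^ 2 ≤ (n : ℝ) * ∑ i, (‖B i i‖) ^ 2 := by
      have := sq_sum_le_card_mul_sum_sq (s := (Finset.univ : Finset (Fin n)))
        (f := fun i => ‖B i i‖)
      simpa using this
    have hchain : Complex.normSq t ≤ (n : ℝ) * R1 := by
      calc Complex.normSq t = (‖t‖) ^ 2 := (Complex.sq_norm t).symm
        _ ≤ (∑ i, ‖B i i‖) ^ 2 := by
            apply pow_le_pow_left₀ (norm_nonneg t) habs_t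
        _ ≤ (n : ℝ) * ∑ i, (‖B i i‖) ^ 2 := hcs
        _ = (n : ℝ) * ∑ i, Complex.normSq (B i i) := by
            congr 1; exact Finset.sum_congr rfl fun i _ => Complex.sq_norm _
        _ ≤ (n : ℝ) * R1 := by
            apply mul_le_mul_of_nonneg_left hdiag_le (by positivity)
    rcases Nat.eq_zero_or_pos n with hn0 | hn0
    · subst hn0
      have : t = 0 := by rw [htrDM]; simp
      simp [this, hR1nonneg]
    · have hnpos : (0 : ℝ) < n := by exact_mod_cast hn0
      rw [sub_nonneg, one_div, inv_mul_le_iff₀ hnpos]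
      exact hchain
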